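/- A set function c on subsets of a space X which is monotone, continuous along increasing sequences of arbitrary sets (c(∪_i E_i) = lim c(E_i) for E_1 ⊂ E_2 ⊂ ⋯), and continuous along decreasing sequences of compact sets (c(∩_i K_i) = lim c(K_i)) is a Choquet capacity; consequently every Borel set E satisfies c(E) = sup{c(K) : K ⊂ E compact}. -/

import Mathlib

open Filter Topology Set MeasureTheory

private def BB (σ : ℕ → ℕ) (n : ℕ) : Set (ℕ → ℕ) := {x | ∀ i < n, x i ≤ σ i}

private lemma BB_succ (τ : ℕ → ℕ) (n m : ℕ) :
    BB (Function.update τ n m) (n + 1) = {x | (∀ i < n, x i ≤ τ i) ∧ x n ≤ m} := by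
  ext x
  simp only [BB, mem_setOf_eq, Nat.lt_succ_iff_lt_or_eq]
  constructor
  · intro hx
    refine ⟨fun i hi => ?_, ?_⟩
    · have := hx i (Or.inl hi)
      rwa [Function.update_of_ne hi.ne] at this
    · have := hx n (Or.inr rfl)
      rwa [Function.update_self] at this
  · rintro ⟨h1, h2⟩ i (hi | rfl)
    · rw [Function.update_of_ne hi.ne]; exact h1 i hi
    · rwa [Function.update_self]

private lemma BB_eq_of_agree {σ τ : ℕ → ℕ} {n : ℕ} (h : ∀ i < n, σ i = τ i) :
    BB σ n = BB τ n := by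
  ext x; exact ⟨fun hx i hi => h i hi ▸ hx i hi, fun hx i hi => (h i hi).symm ▸ hx i hi⟩

lemma choquet_core {X : Type*} [MetricSpace X] (c : Set X → ENNReal)
    (hmono : ∀ A B : Set X, A ⊆ B → c A ≤ c B)
    (hinc : ∀ E : ℕ → Set X, (∀ i, E i ⊆ E (i + 1)) →
      Tendsto (fun i => c (E i)) atTop (nhds (c (⋃ i, E i))))
    (hdec : ∀ K : ℕ → Set X, (∀ i, IsCompact (K i)) → (∀ i, K (i + 1) ⊆ K i) →
      Tendsto (fun i => c (K i)) atTop (nhds (c (⋂ i, K i))))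
    {C : Set X} (hC : IsCompact C) {f : (ℕ → ℕ) → X} (hf : Continuous f)
    (hfC : Set.range f ⊆ C) {r : ENNReal} (hr : r < c (Set.range f)) :
    ∃ K : Set X, IsCompact K ∧ K ⊆ Set.range f ∧ r ≤ c K := by
  classical
  -- step lemma: we can bound one more coordinate
  have key : ∀ (τ : ℕ → ℕ) (n : ℕ), ∃ m, (r < c (f '' BB τ n) →
      r < c (f '' BB (Function.update τ n m) (n + 1))) := by
    intro τ n
    by_cases h : r < c (f '' BB τ n)
    · have hU : (⋃ m, f '' BB (Function.update τ n m) (n + 1)) = f '' BB τ n := by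
        apply Subset.antisymm
        · exact iUnion_subset fun m => image_mono (f := f) (by
            rw [BB_succ]; exact fun x hx i hi => hx.1 i hi)
        · rintro y ⟨x, hx, rfl⟩
          exact mem_iUnion.2 ⟨x n, mem_image_of_mem f (by
            rw [BB_succ]; exact ⟨hx, le_refl _⟩)⟩
      have hmon : ∀ m, f '' BB (Function.update τ n m) (n + 1)
          ⊆ f '' BB (Function.update τ n (m + 1)) (n + 1) := by
        intro m
        apply image_mono
        rw [BB_succ, BB_succ]
        exact fun x hx => ⟨hx.1, hx.2.trans (Nat.le_succ m)⟩
      have := hinc (fun m => f '' BB (Function.update τ n m) (n + 1)) hmon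
      rw [hU] at this
      obtain ⟨m, hm⟩ := (this.eventually (eventually_gt_nhds h)).exists
      exact ⟨m, fun _ => hm⟩
    · exact ⟨0, fun h' => absurd h' h⟩
  choose g hg using key
  -- build the sequence of prefixes
  set t : ℕ → (ℕ → ℕ) := fun n => Nat.rec (fun _ => 0)
    (fun n τ => Function.update τ n (g τ n)) n with ht
  have ht_succ : ∀ n, t (n + 1) = Function.update (t n) n (g (t n) n) := fun n => rfl
  set σ : ℕ → ℕ := fun i => t (i + 1) i with hσ
  have agree : ∀ n i, i < n → t n i = σ i := by
    intro n
    induction n with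
    | zero => intro i hi; omega
    | succ n ih =>
      intro i hi
      rcases Nat.lt_succ_iff_lt_or_eq.1 hi with hi' | rfl
      · rw [ht_succ, Function.update_of_ne hi'.ne, ih i hi']
      · rfl
  have hBσ : ∀ n, BB σ n = BB (t n) n :=
    fun n => BB_eq_of_agree fun i hi => (agree n i hi).symm
  have hcn : ∀ n, r < c (f '' BB σ n) := by
    intro n
    rw [hBσ]
    induction n with
    | zero =>
      have : BB (t 0) 0 = univ := by ext x; simp [BB]
      rwa [this, image_univ]
    | succ n ih =>
      rw [ht_succ]
      exact hg (t n) n ih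
  -- the compact set
  set L : Set (ℕ → ℕ) := {x | ∀ i, x i ≤ σ i} with hL
  have hLc : IsCompact L := by
    have : L = Set.univ.pi (fun i => Set.Iic (σ i)) := by
      ext x; simp [hL, Set.mem_pi, Pi.le_def]
    rw [this]
    exact isCompact_univ_pi fun i => (Set.finite_Iic _).isCompact
  refine ⟨f '' L, hLc.image hf, image_subset_range f L, ?_⟩
  -- the decreasing compacts
  set D : ℕ → Set X := fun n => closure (f '' BB σ n) with hD
  have hDC : ∀ n, D n ⊆ C := fun n =>
    closure_minimal ((image_subset_range f _).trans hfC) hC.isClosed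
  have hDc : ∀ n, IsCompact (D n) := fun n =>
    hC.of_isClosed_subset isClosed_closure (hDC n)
  have hDdec : ∀ n, D (n + 1) ⊆ D n := by
    intro n
    apply closure_mono
    apply image_mono
    exact fun x hx i hi => hx i (hi.trans (Nat.lt_succ_self n))
  have hrD : r ≤ c (⋂ n, D n) := by
    refine ge_of_tendsto (hdec D hDc hDdec) (Eventually.of_forall fun n => ?_)
    exact ((hcn n).trans_le (hmono _ _ subset_closure)).le
  refine hrD.trans (hmono _ _ ?_)
  -- key inclusion: ⋂ D n ⊆ f '' L
  intro y hy
  simp only [mem_iInter] at hy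
  -- choose approximating points
  have hx : ∀ n : ℕ, ∃ x ∈ BB σ n, dist y (f x) < 1 / (n + 1) := by
    intro n
    have hyn := hy n
    rw [Metric.mem_closure_iff] at hyn
    obtain ⟨z, hz, hdz⟩ := hyn (1 / (n + 1)) (by positivity)
    obtain ⟨x, hx, rfl⟩ := hz
    exact ⟨x, hx, hdz⟩
  choose x hx1 hx2 using hx
  set xt : ℕ → (ℕ → ℕ) := fun n i => min (x n i) (σ i) with hxt
  have hxtL : ∀ n, xt n ∈ L := fun n i => min_le_right _ _
  obtain ⟨a, haL, φ, hφ, hconv⟩ := hLc.tendsto_subseq hxtL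
  -- x ∘ φ also converges to a
  have hconv' : Tendsto (fun n => x (φ n)) atTop (𝓝 a) := by
    rw [tendsto_pi_nhds]
    intro i
    have h1 : Tendsto (fun n => xt (φ n) i) atTop (𝓝 (a i)) :=
      (tendsto_pi_nhds.1 hconv) i
    apply h1.congr'
    filter_upwards [eventually_ge_atTop (i + 1)] with n hn
    have hφn : i < φ n := lt_of_lt_of_le (Nat.lt_of_succ_le hn) (hφ.le_apply)
    have : x (φ n) i ≤ σ i := hx1 (φ n) i hφn
    simp [hxt, min_eq_left this]
  -- f ∘ x converges to y
  have hfy : Tendsto (fun n => f (x n)) atTop (𝓝 y) := by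
    rw [tendsto_iff_dist_tendsto_zero]
    apply squeeze_zero (fun n => dist_nonneg) (fun n => (dist_comm (f (x n)) y ▸ (hx2 n).le))
    exact tendsto_one_div_add_atTop_nhds_zero_nat
  have hfy' : Tendsto (fun n => f (x (φ n))) atTop (𝓝 y) :=
    hfy.comp hφ.tendsto_atTop
  have hfa : Tendsto (fun n => f (x (φ n))) atTop (𝓝 (f a)) :=
    (hf.tendsto a).comp hconv'
  have : f a = y := tendsto_nhds_unique hfa hfy'
  exact ⟨a, haL, this⟩


/-- Choquet capacitability: a monotone set function on a locally compact Hausdorff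
second-countable space which is continuous along increasing sequences of arbitrary
sets and along decreasing sequences of compact sets satisfies
`c(E) = sup {c(K) : K ⊆ E compact}` for every Borel set `E`. -/
theorem choquet_capacitability {X : Type*} [TopologicalSpace X]
    [LocallyCompactSpace X] [T2Space X] [SecondCountableTopology X]
    [MeasurableSpace X] [BorelSpace X]
    (c : Set X → ENNReal)
    (hmono : ∀ A B : Set X, A ⊆ B → c A ≤ c B)
    (hinc : ∀ E : ℕ → Set X, (∀ i, E i ⊆ E (i + 1)) →
      Tendsto (fun i => c (E i)) atTop (nhds (c (⋃ i, E i))))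
    (hdec : ∀ K : ℕ → Set X, (∀ i, IsCompact (K i)) → (∀ i, K (i + 1) ⊆ K i) →
      Tendsto (fun i => c (K i)) atTop (nhds (c (⋂ i, K i)))) :
    ∀ E : Set X, MeasurableSet E →
      c E = ⨆ (K : Set X) (_ : IsCompact K) (_ : K ⊆ E), c K := by
  intro E hE
  refine le_antisymm ?_ (iSup_le fun K => iSup_le fun _ => iSup_le fun hKE => hmono _ _ hKE)
  refine le_of_forall_lt_imp_le_of_dense fun r hr => ?_
  -- reduce to a compact piece via σ-compactness
  have hcov : ∀ j, E ∩ compactCovering X j ⊆ E ∩ compactCovering X (j + 1) :=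
    fun j => inter_subset_inter_right E (compactCovering_subset X (Nat.le_succ j))
  have hUcov : (⋃ j, E ∩ compactCovering X j) = E := by
    rw [← inter_iUnion, iUnion_compactCovering, inter_univ]
  have htend := hinc (fun j => E ∩ compactCovering X j) hcov
  rw [hUcov] at htend
  obtain ⟨j, hj⟩ := (htend.eventually (eventually_gt_nhds hr)).exists
  set C := compactCovering X j with hC
  have hCc : IsCompact C := isCompact_compactCovering X j
  -- E ∩ C is analytic
  have hmeas : MeasurableSet (E ∩ C) := hE.inter hCc.isClosed.measurableSet
  have hana : AnalyticSet (E ∩ C) := by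
    haveI : CompactSpace C := isCompact_iff_compactSpace.mp hCc
    letI : MetricSpace C := TopologicalSpace.metrizableSpaceMetric C
    have h1 : MeasurableSet ((↑) ⁻¹' (E ∩ C) : Set C) := measurable_subtype_coe hmeas
    have h3 := h1.analyticSet.image_of_continuous continuous_subtype_val
    rwa [Subtype.image_preimage_coe, Set.inter_eq_right.mpr inter_subset_right] at h3
  rw [MeasureTheory.AnalyticSet] at hana
  rcases hana with hemp | ⟨f, hfc, hfr⟩
  · -- E ∩ C = ∅ : the empty compact set works
    have : r ≤ c ∅ := by rw [← hemp]; exact hj.le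
    calc r ≤ c ∅ := this
      _ ≤ ⨆ (K : Set X) (_ : IsCompact K) (_ : K ⊆ E), c K := by
          refine le_trans ?_ (le_iSup _ (∅ : Set X))
          simp [isCompact_empty]
  · -- the Choquet construction
    letI : MetricSpace X := TopologicalSpace.metrizableSpaceMetric X
    rw [← hfr] at hj
    have hfC : Set.range f ⊆ C := hfr ▸ inter_subset_right
    obtain ⟨K, hKc, hKsub, hKr⟩ := choquet_core c hmono hinc hdec hCc hfc hfC hj
    have hKE : K ⊆ E := hKsub.trans (hfr ▸ inter_subset_left)
    calc r ≤ c K := hKr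
      _ ≤ ⨆ (K : Set X) (_ : IsCompact K) (_ : K ⊆ E), c K := by
          refine le_trans ?_ (le_iSup _ K)
          rw [iSup_pos hKc, iSup_pos hKE]
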